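/- arXiv:2402.01066 — 6 statements merged into one kernel-verified Lean document; each statement's English description precedes it below -/
import Mathlib

section
/- Let G be an Eulerian digraph in which every node has in-degree 2 and out-degree 2, let P be the 0/1-circulation polytope of G, let 0 ∈ P be the zero flow, and let x = 1 ∈ P be the full flow (both are vertices of P). Then the circuit distance from 0 to x equals 2 if and only if G decomposes into two simple Hamiltonian dicycles. -/
open Matrix

/-- `g` is a circuit of the polyhedron `{x : A x = b, B x ≤ d}` with respect to the
description `(A, B)`: a nonzero element of `ker A` with coprime integral components such that
`B g` is support-minimal among `{B x : x ∈ ker A, x ≠ 0}`. -/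
def IsCircuit {mA mB n : Type*} [Fintype n]
    (A : Matrix mA n ℝ) (B : Matrix mB n ℝ) (g : n → ℝ) : Prop :=
  A.mulVec g = 0 ∧ g ≠ 0 ∧
  (∃ z : n → ℤ, (∀ i, (z i : ℝ) = g i) ∧ Finset.univ.gcd z = 1) ∧
  ∀ x : n → ℝ, A.mulVec x = 0 → x ≠ 0 →
    ¬ (Function.support (B.mulVec x) ⊂ Function.support (B.mulVec g))

/-- Membership in the polyhedron `{x : A x = b, B x ≤ d}`. -/
def InPoly {mA mB n : Type*} [Fintype n] (A : Matrix mA n ℝ) (b : mA → ℝ)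
    (B : Matrix mB n ℝ) (d : mB → ℝ) (x : n → ℝ) : Prop :=
  A.mulVec x = b ∧ B.mulVec x ≤ d

/-- `((g 0, lam 0), …, (g (r-1), lam (r-1)))` is a (maximal) circuit walk from `x` to `y`
in the polyhedron `{x : A x = b, B x ≤ d}`. -/
def IsCircuitWalk {mA mB n : Type*} [Fintype n]
    (A : Matrix mA n ℝ) (b : mA → ℝ) (B : Matrix mB n ℝ) (d : mB → ℝ)
    (x y : n → ℝ) (r : ℕ) (g : Fin r → n → ℝ) (lam : Fin r → ℝ) : Prop :=
  (∀ i, IsCircuit A B (g i)) ∧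
  (∀ i, 0 < lam i) ∧
  (∀ k : Fin r, InPoly A b B d (x + ∑ i ∈ Finset.univ.filter (fun i => i ≤ k), lam i • g i)) ∧
  (x + ∑ i, lam i • g i = y) ∧
  (∀ k : Fin r, ∀ mu : ℝ, lam k < mu →
    ¬ InPoly A b B d ((x + ∑ i ∈ Finset.univ.filter (fun i => i < k), lam i • g i) + mu • g k))

/-- `u` and `u'` are sign-compatible with respect to `B`. -/
def SignCompat {mB n : Type*} [Fintype n] (B : Matrix mB n ℝ) (u u' : n → ℝ) : Prop :=
  ∀ i, 0 ≤ B.mulVec u i * B.mulVec u' i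

/-- Sign-compatible circuit decomposition of the vector `u` with respect to `(A, B)`. -/
def IsSCDecomp {mA mB n : Type*} [Fintype n]
    (A : Matrix mA n ℝ) (B : Matrix mB n ℝ) (u : n → ℝ)
    (r : ℕ) (g : Fin r → n → ℝ) (lam : Fin r → ℝ) : Prop :=
  (∀ i, IsCircuit A B (g i)) ∧ (∀ i, 0 < lam i) ∧ (∑ i, lam i • g i = u) ∧
  ∀ i j, SignCompat B (g i) (g j)

/-- A loopless digraph with node type `N` and arc type `α`. -/
structure Digraph' (N α : Type*) where
  src : α → N
  dst : α → N
  loopless : ∀ a, src a ≠ dst a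

/-- The node-arc incidence matrix of a digraph. -/
def incMat {N α : Type*} [DecidableEq N] (G : Digraph' N α) : Matrix N α ℝ :=
  Matrix.of fun v a => if G.src a = v then 1 else if G.dst a = v then -1 else 0

/-- The inequality system `x ≤ 1`-style box constraints: rows of the identity followed by
rows of the negative identity. -/
def boxB (α : Type*) [DecidableEq α] : Matrix (α ⊕ α) α ℝ :=
  Matrix.fromRows 1 (-1)

/-- Right-hand side for the box constraints `x ≤ 1`, `-x ≤ 0` of the 0/1-circulation polytope. -/
def boxd (α : Type*) : α ⊕ α → ℝ := Sum.elim (fun _ => 1) (fun _ => 0)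

/-- In-degree of a node. -/
def inDeg {N α : Type*} [Fintype α] [DecidableEq N] (G : Digraph' N α) (v : N) : ℕ :=
  (Finset.univ.filter fun a => G.dst a = v).card

/-- Out-degree of a node. -/
def outDeg {N α : Type*} [Fintype α] [DecidableEq N] (G : Digraph' N α) (v : N) : ℕ :=
  (Finset.univ.filter fun a => G.src a = v).card

/-- `S` is the arc set of a simple dicycle of `G` (a directed cycle with no repeated nodes). -/
def IsSimpleDicycle {N α : Type*} (G : Digraph' N α) (S : Set α) : Prop :=
  ∃ (k : ℕ) (e : Fin (k+1) → α) (v : Fin (k+1) → N),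
    Function.Injective e ∧ Function.Injective v ∧ S = Set.range e ∧
    ∀ i, G.src (e i) = v i ∧ G.dst (e i) = v (i + 1)

/-- `S` is the arc set of a simple Hamiltonian dicycle of `G`. -/
def IsHamiltonianDicycle {N α : Type*} (G : Digraph' N α) (S : Set α) : Prop :=
  ∃ (k : ℕ) (e : Fin (k+1) → α) (v : Fin (k+1) → N),
    Function.Injective e ∧ Function.Bijective v ∧ S = Set.range e ∧
    ∀ i, G.src (e i) = v i ∧ G.dst (e i) = v (i + 1)

/-- `G` decomposes into two simple Hamiltonian dicycles. -/
def DecompTwoHamiltonian {N α : Type*} (G : Digraph' N α) : Prop :=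
  ∃ S₁ S₂ : Set α, IsHamiltonianDicycle G S₁ ∧ IsHamiltonianDicycle G S₂ ∧
    Disjoint S₁ S₂ ∧ S₁ ∪ S₂ = Set.univ


set_option linter.unusedSectionVars false
set_option maxHeartbeats 1000000

open Classical in
/-- The 0/1 indicator vector of the arc set of a cycle given by `e`. -/
noncomputable def cycInd {α : Type*} {k : ℕ} (e : Fin (k+1) → α) : α → ℝ :=
  fun a => if a ∈ Set.range e then 1 else 0

section AuxProofs

variable {N α : Type*} [Fintype N] [Fintype α] [DecidableEq N] [DecidableEq α]

lemma cycInd_mem {k : ℕ} {e : Fin (k+1) → α} {a : α} (h : a ∈ Set.range e) :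
    cycInd e a = 1 := by simp [cycInd, h]

lemma cycInd_not_mem {k : ℕ} {e : Fin (k+1) → α} {a : α} (h : a ∉ Set.range e) :
    cycInd e a = 0 := by simp [cycInd, h]

lemma cycInd_ne_zero {k : ℕ} (e : Fin (k+1) → α) : cycInd e ≠ 0 := by
  intro h
  have h0 : cycInd e (e 0) = 1 := cycInd_mem ⟨0, rfl⟩
  rw [h] at h0
  simp at h0

lemma incMat_mulVec_apply (G : Digraph' N α) (x : α → ℝ) (v : N) :
    (incMat G).mulVec x v =
      (∑ a ∈ Finset.univ.filter (fun a => G.src a = v), x a)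
      - ∑ a ∈ Finset.univ.filter (fun a => G.dst a = v), x a := by
  simp only [Matrix.mulVec, dotProduct, incMat, Matrix.of_apply]
  rw [Finset.sum_filter, Finset.sum_filter, ← Finset.sum_sub_distrib]
  apply Finset.sum_congr rfl
  intro a _
  by_cases h1 : G.src a = v
  · have h2 : ¬ G.dst a = v := fun h => G.loopless a (h1.trans h.symm)
    simp [h1, h2]
  · by_cases h2 : G.dst a = v <;> simp [h1, h2]

lemma boxB_mulVec (x : α → ℝ) : (boxB α).mulVec x = Sum.elim x (-x) := by
  unfold boxB
  rw [Matrix.fromRows_mulVec, Matrix.one_mulVec, Matrix.neg_mulVec, Matrix.one_mulVec]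

lemma inPoly_iff (G : Digraph' N α) (x : α → ℝ) :
    InPoly (incMat G) 0 (boxB α) (boxd α) x ↔
      (incMat G).mulVec x = 0 ∧ (∀ a, 0 ≤ x a) ∧ (∀ a, x a ≤ 1) := by
  unfold InPoly
  rw [boxB_mulVec]
  constructor
  · rintro ⟨h1, h2⟩
    refine ⟨h1, fun a => ?_, fun a => ?_⟩
    · have := h2 (Sum.inr a); simp only [Sum.elim_inr, Pi.neg_apply, boxd] at this; linarith
    · have := h2 (Sum.inl a); simpa [boxd] using this
  · rintro ⟨h1, h2, h3⟩
    refine ⟨h1, fun i => ?_⟩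
    cases i with
    | inl a => simpa [boxd] using h3 a
    | inr a => simp only [Sum.elim_inr, Pi.neg_apply, boxd]; linarith [h2 a]

open Fin.NatCast in
lemma constant_on_cycle (G : Digraph' N α) {k : ℕ} (e : Fin (k+1) → α) (v : Fin (k+1) → N)
    (hv : Function.Injective v)
    (hev : ∀ i, G.src (e i) = v i ∧ G.dst (e i) = v (i + 1))
    (x : α → ℝ) (hx : (incMat G).mulVec x = 0)
    (hsupp : ∀ a, x a ≠ 0 → a ∈ Set.range e) :
    ∀ i j, x (e i) = x (e j) := by
  have step : ∀ i : Fin (k+1), x (e i) = x (e (i+1)) := by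
    intro i
    have h0 := congrFun hx (v (i+1))
    rw [incMat_mulVec_apply, Pi.zero_apply] at h0
    have hout : (∑ a ∈ Finset.univ.filter (fun a => G.src a = v (i+1)), x a) = x (e (i+1)) := by
      apply Finset.sum_eq_single_of_mem
      · simp [(hev (i+1)).1]
      · intro b hb hbne
        by_contra hxb
        obtain ⟨j, rfl⟩ := hsupp b hxb
        have hsj : G.src (e j) = v (i+1) := (Finset.mem_filter.mp hb).2
        rw [(hev j).1] at hsj
        exact hbne (congrArg e (hv hsj))
    have hin : (∑ a ∈ Finset.univ.filter (fun a => G.dst a = v (i+1)), x a) = x (e i) := by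
      apply Finset.sum_eq_single_of_mem
      · simp [(hev i).2]
      · intro b hb hbne
        by_contra hxb
        obtain ⟨j, rfl⟩ := hsupp b hxb
        have hdj : G.dst (e j) = v (i+1) := (Finset.mem_filter.mp hb).2
        rw [(hev j).2] at hdj
        have : j = i := add_right_cancel (hv hdj)
        exact hbne (congrArg e this)
    rw [hout, hin] at h0
    linarith
  have key : ∀ (m : ℕ), ∀ i, x (e i) = x (e (i + (m : Fin (k+1)))) := by
    intro m
    induction m with
    | zero => intro i; simp
    | succ p ih =>
      intro i
      have hc : (((p:ℕ)+1 : ℕ) : Fin (k+1)) = (p : Fin (k+1)) + 1 := by push_cast; ring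
      rw [hc, ← add_assoc]
      exact (ih i).trans (step (i + (p : Fin (k+1))))
  intro i j
  have h2 := key ((j - i).val) i
  rwa [Fin.cast_val_eq_self, add_sub_cancel] at h2

lemma cycInd_circulation (G : Digraph' N α) {k : ℕ} (e : Fin (k+1) → α) (v : Fin (k+1) → N)
    (he : Function.Injective e) (hv : Function.Injective v)
    (hev : ∀ i, G.src (e i) = v i ∧ G.dst (e i) = v (i + 1)) :
    (incMat G).mulVec (cycInd e) = 0 := by
  funext w
  rw [incMat_mulVec_apply, Pi.zero_apply]
  by_cases hw : ∃ j, v j = w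
  · obtain ⟨j, rfl⟩ := hw
    have hout : (∑ a ∈ Finset.univ.filter (fun a => G.src a = v j), cycInd e a) = 1 := by
      rw [Finset.sum_eq_single_of_mem (e j)]
      · exact cycInd_mem ⟨j, rfl⟩
      · simp [(hev j).1]
      · intro b hb hbne
        by_contra hxb
        have hmem : b ∈ Set.range e := by
          by_contra hm; exact hxb (cycInd_not_mem hm)
        obtain ⟨m, rfl⟩ := hmem
        have hsj : G.src (e m) = v j := (Finset.mem_filter.mp hb).2
        rw [(hev m).1] at hsj
        exact hbne (congrArg e (hv hsj))
    have hin : (∑ a ∈ Finset.univ.filter (fun a => G.dst a = v j), cycInd e a) = 1 := by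
      rw [Finset.sum_eq_single_of_mem (e (j-1))]
      · exact cycInd_mem ⟨j-1, rfl⟩
      · have : G.dst (e (j-1)) = v j := by rw [(hev (j-1)).2, sub_add_cancel]
        simp [this]
      · intro b hb hbne
        by_contra hxb
        have hmem : b ∈ Set.range e := by
          by_contra hm; exact hxb (cycInd_not_mem hm)
        obtain ⟨m, rfl⟩ := hmem
        have hdj : G.dst (e m) = v j := (Finset.mem_filter.mp hb).2
        rw [(hev m).2] at hdj
        have : m = j - 1 := eq_sub_of_add_eq (hv hdj)
        exact hbne (congrArg e this)
    rw [hout, hin]; ring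
  · push_neg at hw
    have hout : (∑ a ∈ Finset.univ.filter (fun a => G.src a = w), cycInd e a) = 0 := by
      apply Finset.sum_eq_zero
      intro b hb
      by_contra hxb
      have hmem : b ∈ Set.range e := by by_contra hm; exact hxb (cycInd_not_mem hm)
      obtain ⟨m, rfl⟩ := hmem
      have hs := (Finset.mem_filter.mp hb).2
      rw [(hev m).1] at hs
      exact hw m hs
    have hin : (∑ a ∈ Finset.univ.filter (fun a => G.dst a = w), cycInd e a) = 0 := by
      apply Finset.sum_eq_zero
      intro b hb
      by_contra hxb
      have hmem : b ∈ Set.range e := by by_contra hm; exact hxb (cycInd_not_mem hm)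
      obtain ⟨m, rfl⟩ := hmem
      have hs := (Finset.mem_filter.mp hb).2
      rw [(hev m).2] at hs
      exact hw (m+1) hs
    rw [hout, hin]; ring

lemma cycInd_isCircuit (G : Digraph' N α) {k : ℕ} (e : Fin (k+1) → α) (v : Fin (k+1) → N)
    (he : Function.Injective e) (hv : Function.Injective v)
    (hev : ∀ i, G.src (e i) = v i ∧ G.dst (e i) = v (i + 1)) :
    IsCircuit (incMat G) (boxB α) (cycInd e) := by
  classical
  refine ⟨cycInd_circulation G e v he hv hev, cycInd_ne_zero e, ?_, ?_⟩
  · refine ⟨fun a => if a ∈ Set.range e then 1 else 0, fun a => ?_, ?_⟩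
    · by_cases h : a ∈ Set.range e
      · simp [h, cycInd_mem h]
      · simp [h, cycInd_not_mem h]
    · set Z : α → ℤ := fun a => if a ∈ Set.range e then 1 else 0 with hZ
      have h1 : Finset.univ.gcd Z ∣ Z (e 0) := Finset.gcd_dvd (Finset.mem_univ _)
      have h2 : Z (e 0) = 1 := by simp [hZ]
      rw [h2] at h1
      have hnn : 0 ≤ Finset.univ.gcd Z := by
        rw [← Finset.normalize_gcd, ← Int.abs_eq_normalize]
        exact abs_nonneg _
      exact Int.eq_one_of_dvd_one hnn h1
  · intro x hx hxne hss
    have hsupp : ∀ a, x a ≠ 0 → a ∈ Set.range e := by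
      intro a ha
      have hmem : Sum.inl a ∈ Function.support ((boxB α).mulVec x) := by
        rw [boxB_mulVec]; simpa [Function.mem_support] using ha
      have := hss.1 hmem
      rw [boxB_mulVec] at this
      simp only [Function.mem_support, Sum.elim_inl] at this
      by_contra hm
      exact this (cycInd_not_mem hm)
    have hconst := constant_on_cycle G e v hv hev x hx hsupp
    obtain ⟨a₀, ha₀⟩ : ∃ a, x a ≠ 0 := by
      by_contra h; push_neg at h; exact hxne (funext h)
    obtain ⟨i₀, rfl⟩ := hsupp a₀ ha₀
    have hall : ∀ i, x (e i) ≠ 0 := fun i => (hconst i i₀) ▸ ha₀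
    apply hss.2
    intro s hs
    rw [boxB_mulVec] at hs ⊢
    rcases s with a | a
    · simp only [Function.mem_support, Sum.elim_inl] at hs ⊢
      have : a ∈ Set.range e := by
        by_contra hm; exact hs (cycInd_not_mem hm)
      obtain ⟨i, rfl⟩ := this
      exact hall i
    · simp only [Function.mem_support, Sum.elim_inr, Pi.neg_apply, ne_eq, neg_eq_zero] at hs ⊢
      have : a ∈ Set.range e := by
        by_contra hm; exact hs (cycInd_not_mem hm)
      obtain ⟨i, rfl⟩ := this
      exact hall i

lemma exists_dicycle_of_pos_circulation (G : Digraph' N α) (x : α → ℝ)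
    (hx : (incMat G).mulVec x = 0) (hnn : ∀ a, 0 ≤ x a) (a₀ : α) (h0 : 0 < x a₀) :
    ∃ (k : ℕ) (e : Fin (k+1) → α) (v : Fin (k+1) → N),
      Function.Injective e ∧ Function.Injective v ∧
      (∀ i, G.src (e i) = v i ∧ G.dst (e i) = v (i + 1)) ∧
      (∀ i, 0 < x (e i)) := by
  classical
  have hstep : ∀ a : α, 0 < x a → ∃ b, G.src b = G.dst a ∧ 0 < x b := by
    intro a ha
    have h0' := congrFun hx (G.dst a)
    rw [incMat_mulVec_apply, Pi.zero_apply] at h0'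
    have hin : 0 < ∑ b ∈ Finset.univ.filter (fun b => G.dst b = G.dst a), x b := by
      have hmem : a ∈ Finset.univ.filter (fun b => G.dst b = G.dst a) := by simp
      calc (0:ℝ) < x a := ha
        _ ≤ _ := Finset.single_le_sum (fun b _ => hnn b) hmem
    have hout : 0 < ∑ b ∈ Finset.univ.filter (fun b => G.src b = G.dst a), x b := by linarith
    by_contra hc
    push_neg at hc
    have : ∑ b ∈ Finset.univ.filter (fun b => G.src b = G.dst a), x b = 0 := by
      apply Finset.sum_eq_zero
      intro b hb
      have hs := (Finset.mem_filter.mp hb).2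
      have := hc b hs
      have := hnn b
      linarith
    linarith
  let F : ℕ → {a : α // 0 < x a} := fun n =>
    Nat.rec ⟨a₀, h0⟩ (fun _ p => ⟨(hstep p.1 p.2).choose, (hstep p.1 p.2).choose_spec.2⟩) n
  have hF : ∀ n, F (n+1) = ⟨(hstep (F n).1 (F n).2).choose, (hstep (F n).1 (F n).2).choose_spec.2⟩ :=
    fun n => rfl
  have hchain : ∀ n, G.src (F (n+1)).1 = G.dst (F n).1 := by
    intro n
    rw [hF n]
    exact (hstep (F n).1 (F n).2).choose_spec.1
  set vseq : ℕ → N := fun n => G.src (F n).1 with hvseq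
  have hrep : ∃ q, ∃ p, p < q ∧ vseq p = vseq q := by
    obtain ⟨i, j, hij, hv⟩ := Finite.exists_ne_map_eq_of_infinite vseq
    rcases lt_or_gt_of_ne hij with h | h
    · exact ⟨j, i, h, hv⟩
    · exact ⟨i, j, h, hv.symm⟩
  set J := Nat.find hrep with hJ
  obtain ⟨I, hIJ, hvI⟩ := Nat.find_spec hrep
  have hmin : ∀ q < J, ¬ ∃ p, p < q ∧ vseq p = vseq q := fun q hq => Nat.find_min hrep hq
  set k := J - I - 1 with hk
  have hkJ : I + (k + 1) = J := by omega
  have haux : ∀ p q : ℕ, p < q → q < J → vseq p ≠ vseq q := by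
    intro p q hpq hqJ hv
    exact hmin q hqJ ⟨p, hpq, hv⟩
  have hvinj : Function.Injective (fun m : Fin (k+1) => vseq (I + m.val)) := by
    intro m m' h
    simp only at h
    by_contra hne
    have hval : m.val ≠ m'.val := fun hv => hne (Fin.ext hv)
    have hm := m.isLt
    have hm' := m'.isLt
    rcases Nat.lt_or_ge m.val m'.val with hlt | hge
    · exact haux (I + m.val) (I + m'.val) (by omega) (by omega) h
    · have hlt : m'.val < m.val := by omega
      exact haux (I + m'.val) (I + m.val) (by omega) (by omega) h.symm
  refine ⟨k, fun m => (F (I + m.val)).1, fun m => vseq (I + m.val), ?_, hvinj, ?_,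
    fun m => (F (I + m.val)).2⟩
  · intro m m' h
    apply hvinj
    show vseq (I + m.val) = vseq (I + m'.val)
    exact congrArg G.src h
  · intro m
    refine ⟨rfl, ?_⟩
    show G.dst (F (I + m.val)).1 = vseq (I + (m+1).val)
    rw [← hchain (I + m.val)]
    by_cases hm : m.val < k
    · have : (m+1).val = m.val + 1 := by
        rw [Fin.val_add_one_of_lt]
        exact hm
      rw [this, ← add_assoc]
    · have hmk : m.val = k := by omega
      have hml : m = Fin.last k := by
        apply Fin.ext; simpa using hmk
      have : (m+1) = 0 := by rw [hml]; simp
      rw [this]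
      show vseq (I + m.val + 1) = vseq (I + (0:Fin (k+1)).val)
      have : I + m.val + 1 = J := by omega
      rw [this]
      simpa using hvI.symm

lemma nonneg_circuit_eq_cycInd (G : Digraph' N α) (g : α → ℝ)
    (hg : IsCircuit (incMat G) (boxB α) g) (hnn : ∀ a, 0 ≤ g a) :
    ∃ (k : ℕ) (e : Fin (k+1) → α) (v : Fin (k+1) → N),
      Function.Injective e ∧ Function.Injective v ∧
      (∀ i, G.src (e i) = v i ∧ G.dst (e i) = v (i + 1)) ∧
      g = cycInd e := by
  obtain ⟨hcirc, hne, ⟨z, hz, hgcd⟩, hmin⟩ := hg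
  obtain ⟨a₀, ha₀⟩ : ∃ a, g a ≠ 0 := by
    by_contra h; push_neg at h; exact hne (funext h)
  have ha₀' : 0 < g a₀ := lt_of_le_of_ne (hnn a₀) (Ne.symm ha₀)
  obtain ⟨k, e, v, he, hv, hev, hpos⟩ :=
    exists_dicycle_of_pos_circulation G g hcirc hnn a₀ ha₀'
  have hχcirc := cycInd_circulation G e v he hv hev
  have hss : Function.support ((boxB α).mulVec (cycInd e)) ⊆
      Function.support ((boxB α).mulVec g) := by
    intro s hs
    rw [boxB_mulVec] at hs ⊢
    rcases s with a | a
    · simp only [Function.mem_support, Sum.elim_inl] at hs ⊢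
      have hm : a ∈ Set.range e := by
        by_contra hm; exact hs (cycInd_not_mem hm)
      obtain ⟨i, rfl⟩ := hm
      exact ne_of_gt (hpos i)
    · simp only [Function.mem_support, Sum.elim_inr, Pi.neg_apply, ne_eq, neg_eq_zero] at hs ⊢
      have hm : a ∈ Set.range e := by
        by_contra hm; exact hs (cycInd_not_mem hm)
      obtain ⟨i, rfl⟩ := hm
      exact ne_of_gt (hpos i)
  have hnstrict := hmin (cycInd e) hχcirc (cycInd_ne_zero e)
  have heqsupp : Function.support ((boxB α).mulVec (cycInd e)) =
      Function.support ((boxB α).mulVec g) := by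
    by_contra hne'
    exact hnstrict ⟨hss, fun h => hne' (Set.Subset.antisymm hss h)⟩
  have hsupp : ∀ a, g a ≠ 0 → a ∈ Set.range e := by
    intro a ha
    have hmem : Sum.inl a ∈ Function.support ((boxB α).mulVec g) := by
      rw [boxB_mulVec]; simpa [Function.mem_support] using ha
    rw [← heqsupp, boxB_mulVec] at hmem
    simp only [Function.mem_support, Sum.elim_inl] at hmem
    by_contra hm
    exact hmem (cycInd_not_mem hm)
  have hconst := constant_on_cycle G e v hv hev g hcirc hsupp
  set c : ℝ := g (e 0) with hc
  have hcpos : 0 < c := hpos 0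
  have hz0 : ∀ a, z (e 0) ∣ z a := by
    intro a
    by_cases hm : a ∈ Set.range e
    · obtain ⟨i, rfl⟩ := hm
      have : (z (e i) : ℝ) = (z (e 0) : ℝ) := by rw [hz, hz, ← hc, hconst i 0]
      rw [Int.cast_injective this]
    · have hga : g a = 0 := by
        by_contra hga; exact hm (hsupp a hga)
      have : (z a : ℝ) = 0 := by rw [hz, hga]
      rw [Int.cast_eq_zero.mp this]
      exact dvd_zero _
  have hdvd1 : z (e 0) ∣ 1 := hgcd ▸ Finset.dvd_gcd (fun a _ => hz0 a)
  have hz0pos : 0 < z (e 0) := by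
    have : (0:ℝ) < (z (e 0) : ℝ) := by rw [hz]; exact hcpos
    exact_mod_cast this
  have hz0one : z (e 0) = 1 := Int.eq_one_of_dvd_one (le_of_lt hz0pos) hdvd1
  have hcone : c = 1 := by
    rw [hc, ← hz, hz0one]; norm_num
  refine ⟨k, e, v, he, hv, hev, funext fun a => ?_⟩
  by_cases hm : a ∈ Set.range e
  · obtain ⟨i, rfl⟩ := hm
    rw [cycInd_mem ⟨i, rfl⟩, hconst i 0, ← hc, hcone]
  · rw [cycInd_not_mem hm]
    by_contra hga
    exact hm (hsupp a hga)

lemma two_out_arcs (G : Digraph' N α) {w : N} (h : outDeg G w = 2) :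
    ∃ a b : α, a ≠ b ∧ G.src a = w ∧ G.src b = w := by
  have h1 : 1 < (Finset.univ.filter fun a => G.src a = w).card := by
    unfold outDeg at h; omega
  obtain ⟨a, ha, b, hb, hab⟩ := Finset.one_lt_card.mp h1
  exact ⟨a, b, hab, (Finset.mem_filter.mp ha).2, (Finset.mem_filter.mp hb).2⟩

lemma not_all_arcs (G : Digraph' N α) [Nonempty N] (hout : ∀ w, outDeg G w = 2)
    {k : ℕ} {e : Fin (k+1) → α} {v : Fin (k+1) → N}
    (hv : Function.Injective v)
    (hev : ∀ i, G.src (e i) = v i ∧ G.dst (e i) = v (i + 1)) :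
    ¬ (∀ a : α, a ∈ Set.range e) := by
  intro hall
  obtain ⟨a, b, hab, hsa, hsb⟩ := two_out_arcs G (hout (Classical.arbitrary N))
  obtain ⟨i, rfl⟩ := hall a
  obtain ⟨j, rfl⟩ := hall b
  have : v i = v j := by rw [← (hev i).1, ← (hev j).1, hsa, hsb]
  exact hab (congrArg e (hv this))

lemma no_walk_zero (G : Digraph' N α) [Nonempty N] (hout : ∀ w, outDeg G w = 2) :
    ¬ ∃ (g : Fin 0 → α → ℝ) (lam : Fin 0 → ℝ),
      IsCircuitWalk (incMat G) 0 (boxB α) (boxd α) (0 : α → ℝ) (1 : α → ℝ) 0 g lam := by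
  rintro ⟨g, lam, -, -, -, hend, -⟩
  obtain ⟨a, b, hab, -, -⟩ := two_out_arcs G (hout (Classical.arbitrary N))
  have := congrFun hend a
  simp at this

lemma no_walk_one (G : Digraph' N α) [Nonempty N] (hout : ∀ w, outDeg G w = 2) :
    ¬ ∃ (g : Fin 1 → α → ℝ) (lam : Fin 1 → ℝ),
      IsCircuitWalk (incMat G) 0 (boxB α) (boxd α) (0 : α → ℝ) (1 : α → ℝ) 1 g lam := by
  rintro ⟨g, lam, hcirc, hpos, hpoly, hend, -⟩
  rw [Fin.sum_univ_one, zero_add] at hend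
  have hpt : ∀ a, lam 0 * g 0 a = 1 := by
    intro a
    have := congrFun hend a
    simpa using this
  have hg0nn : ∀ a, 0 ≤ g 0 a := by
    intro a
    by_contra hc
    push_neg at hc
    nlinarith [hpos 0, hpt a]
  obtain ⟨k, e, v, he, hv, hev, hge⟩ := nonneg_circuit_eq_cycInd G (g 0) (hcirc 0) hg0nn
  apply not_all_arcs G hout hv hev
  intro a
  by_contra hm
  have h0 : g 0 a = 0 := by rw [hge]; exact cycInd_not_mem hm
  have := hpt a
  rw [h0] at this
  simp at this

lemma walk_two_of_decomp (G : Digraph' N α) (hdec : DecompTwoHamiltonian G) :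
    ∃ (g : Fin 2 → α → ℝ) (lam : Fin 2 → ℝ),
      IsCircuitWalk (incMat G) 0 (boxB α) (boxd α) (0 : α → ℝ) (1 : α → ℝ) 2 g lam := by
  obtain ⟨S₁, S₂, ⟨k₁, e₁, v₁, he₁, hv₁, hS₁, hev₁⟩, ⟨k₂, e₂, v₂, he₂, hv₂, hS₂, hev₂⟩,
    hdisj, huniv⟩ := hdec
  have hsum : ∀ a, cycInd e₁ a + cycInd e₂ a = 1 := by
    intro a
    have hmem : a ∈ S₁ ∪ S₂ := huniv ▸ Set.mem_univ a
    rcases hmem with h | h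
    · have h2 : a ∉ S₂ := Set.disjoint_left.mp hdisj h
      rw [hS₁] at h; rw [hS₂] at h2
      rw [cycInd_mem h, cycInd_not_mem h2]; ring
    · have h1 : a ∉ S₁ := Set.disjoint_right.mp hdisj h
      rw [hS₂] at h; rw [hS₁] at h1
      rw [cycInd_mem h, cycInd_not_mem h1]; ring
  have hone : cycInd e₁ + cycInd e₂ = (1 : α → ℝ) := funext fun a => by simpa using hsum a
  have hcirc1 := cycInd_circulation G e₁ v₁ he₁ hv₁.injective hev₁
  have hcirc2 := cycInd_circulation G e₂ v₂ he₂ hv₂.injective hev₂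
  have hnot21 : e₂ 0 ∉ Set.range e₁ := by
    intro hm
    have h1 : e₂ 0 ∈ S₁ := hS₁ ▸ hm
    have h2 : e₂ 0 ∈ S₂ := hS₂ ▸ ⟨0, rfl⟩
    exact Set.disjoint_left.mp hdisj h1 h2
  refine ⟨![cycInd e₁, cycInd e₂], fun _ => 1, ?_, ?_, ?_, ?_, ?_⟩
  · rw [Fin.forall_fin_two]
    constructor
    · simpa using cycInd_isCircuit G e₁ v₁ he₁ hv₁.injective hev₁
    · simpa using cycInd_isCircuit G e₂ v₂ he₂ hv₂.injective hev₂
  · intro i; norm_num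
  · rw [Fin.forall_fin_two]
    constructor
    · have hf : (Finset.univ.filter (fun i : Fin 2 => i ≤ 0)) = {0} := by decide
      rw [hf, Finset.sum_singleton, inPoly_iff]
      simp only [Matrix.cons_val_zero, one_smul, zero_add]
      refine ⟨hcirc1, fun a => ?_, fun a => ?_⟩
      · by_cases h : a ∈ Set.range e₁
        · rw [cycInd_mem h]; norm_num
        · rw [cycInd_not_mem h]
      · by_cases h : a ∈ Set.range e₁
        · rw [cycInd_mem h]
        · rw [cycInd_not_mem h]; norm_num
    · have hf : (Finset.univ.filter (fun i : Fin 2 => i ≤ 1)) = Finset.univ := by decide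
      rw [hf, Fin.sum_univ_two, inPoly_iff]
      simp only [Matrix.cons_val_zero, Matrix.cons_val_one, Matrix.head_cons, one_smul, zero_add]
      rw [hone]
      refine ⟨?_, fun a => ?_, fun a => ?_⟩
      · rw [← hone, Matrix.mulVec_add, hcirc1, hcirc2]; simp
      · simp
      · simp
  · rw [Fin.sum_univ_two]
    simp only [Matrix.cons_val_zero, Matrix.cons_val_one, Matrix.head_cons, one_smul, zero_add]
    exact hone
  · rw [Fin.forall_fin_two]
    constructor <;> intro mu hmu
    · have hf : (Finset.univ.filter (fun i : Fin 2 => i < 0)) = ∅ := by decide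
      rw [hf, Finset.sum_empty, inPoly_iff]
      rintro ⟨-, -, hub⟩
      have := hub (e₁ 0)
      simp only [Matrix.cons_val_zero, add_zero, zero_add, Pi.smul_apply, smul_eq_mul] at this
      rw [cycInd_mem ⟨0, rfl⟩] at this
      simp only [mul_one] at this
      simp only at hmu
      linarith
    · have hf : (Finset.univ.filter (fun i : Fin 2 => i < 1)) = {0} := by decide
      rw [hf, Finset.sum_singleton, inPoly_iff]
      rintro ⟨-, -, hub⟩
      have := hub (e₂ 0)
      simp only [Matrix.cons_val_zero, Matrix.cons_val_one, Matrix.head_cons, one_smul,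
        zero_add, Pi.add_apply, Pi.smul_apply, smul_eq_mul] at this
      rw [cycInd_not_mem hnot21, cycInd_mem ⟨0, rfl⟩] at this
      simp only [mul_one, zero_add] at this
      simp only at hmu
      linarith

lemma decomp_of_walk_two (G : Digraph' N α) [Nonempty N] (hout : ∀ w, outDeg G w = 2)
    (h : ∃ (g : Fin 2 → α → ℝ) (lam : Fin 2 → ℝ),
      IsCircuitWalk (incMat G) 0 (boxB α) (boxd α) (0 : α → ℝ) (1 : α → ℝ) 2 g lam) :
    DecompTwoHamiltonian G := by
  obtain ⟨g, lam, hcirc, hpos, hpoly, hend, -⟩ := h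
  -- bounds from the first intermediate point
  have hp0 := hpoly 0
  have hf : (Finset.univ.filter (fun i : Fin 2 => i ≤ 0)) = {0} := by decide
  rw [hf, Finset.sum_singleton, inPoly_iff] at hp0
  obtain ⟨-, hlb, hub⟩ := hp0
  have hlb' : ∀ a, 0 ≤ lam 0 * g 0 a := by
    intro a; have := hlb a; simpa using this
  have hub' : ∀ a, lam 0 * g 0 a ≤ 1 := by
    intro a; have := hub a; simpa using this
  have hg0nn : ∀ a, 0 ≤ g 0 a := by
    intro a
    by_contra hc
    push_neg at hc
    nlinarith [hpos 0, hlb' a]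
  rw [Fin.sum_univ_two, zero_add] at hend
  have hendpt : ∀ a, lam 0 * g 0 a + lam 1 * g 1 a = 1 := by
    intro a; have := congrFun hend a; simpa using this
  have hg1nn : ∀ a, 0 ≤ g 1 a := by
    intro a
    by_contra hc
    push_neg at hc
    nlinarith [hpos 1, hendpt a, hub' a]
  obtain ⟨k₁, e₁, v₁, he₁, hv₁, hev₁, hge₁⟩ := nonneg_circuit_eq_cycInd G (g 0) (hcirc 0) hg0nn
  obtain ⟨k₂, e₂, v₂, he₂, hv₂, hev₂, hge₂⟩ := nonneg_circuit_eq_cycInd G (g 1) (hcirc 1) hg1nn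
  rw [hge₁, hge₂] at hendpt
  -- lam 1 = 1
  have hlam1 : lam 1 = 1 := by
    obtain ⟨a, ha⟩ := not_forall.mp (not_all_arcs G hout hv₁ hev₁)
    have h1 : cycInd e₁ a = 0 := cycInd_not_mem ha
    have := hendpt a
    rw [h1] at this
    by_cases hm : a ∈ Set.range e₂
    · rw [cycInd_mem hm] at this; linarith
    · rw [cycInd_not_mem hm] at this; simp at this
  have hlam0 : lam 0 = 1 := by
    obtain ⟨a, ha⟩ := not_forall.mp (not_all_arcs G hout hv₂ hev₂)
    have h2 : cycInd e₂ a = 0 := cycInd_not_mem ha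
    have := hendpt a
    rw [h2] at this
    by_cases hm : a ∈ Set.range e₁
    · rw [cycInd_mem hm] at this; linarith
    · rw [cycInd_not_mem hm] at this; simp at this
  rw [hlam0, hlam1] at hendpt
  simp only [one_mul] at hendpt
  -- exact cover
  have hcover : ∀ a, a ∈ Set.range e₁ ∨ a ∈ Set.range e₂ := by
    intro a
    by_contra hc
    push_neg at hc
    have := hendpt a
    rw [cycInd_not_mem hc.1, cycInd_not_mem hc.2] at this
    norm_num at this
  have hdisj : ∀ a, a ∈ Set.range e₁ → a ∉ Set.range e₂ := by
    intro a h1 h2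
    have := hendpt a
    rw [cycInd_mem h1, cycInd_mem h2] at this
    norm_num at this
  -- surjectivity of v₁
  have hsurj₁ : Function.Surjective v₁ := by
    intro w
    obtain ⟨a, b, hab, hsa, hsb⟩ := two_out_arcs G (hout w)
    rcases hcover a with h | h
    · obtain ⟨i, rfl⟩ := h
      exact ⟨i, by rw [← (hev₁ i).1]; exact hsa⟩
    · rcases hcover b with h' | h'
      · obtain ⟨j, rfl⟩ := h'
        exact ⟨j, by rw [← (hev₁ j).1]; exact hsb⟩
      · obtain ⟨i, rfl⟩ := h
        obtain ⟨j, rfl⟩ := h'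
        have : v₂ i = v₂ j := by rw [← (hev₂ i).1, ← (hev₂ j).1, hsa, hsb]
        exact absurd (congrArg e₂ (hv₂ this)) hab
  have hsurj₂ : Function.Surjective v₂ := by
    intro w
    obtain ⟨a, b, hab, hsa, hsb⟩ := two_out_arcs G (hout w)
    rcases hcover a with h | h
    · rcases hcover b with h' | h'
      · obtain ⟨i, rfl⟩ := h
        obtain ⟨j, rfl⟩ := h'
        have : v₁ i = v₁ j := by rw [← (hev₁ i).1, ← (hev₁ j).1, hsa, hsb]
        exact absurd (congrArg e₁ (hv₁ this)) hab
      · obtain ⟨j, rfl⟩ := h'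
        exact ⟨j, by rw [← (hev₂ j).1]; exact hsb⟩
    · obtain ⟨i, rfl⟩ := h
      exact ⟨i, by rw [← (hev₂ i).1]; exact hsa⟩
  refine ⟨Set.range e₁, Set.range e₂,
    ⟨k₁, e₁, v₁, he₁, ⟨hv₁, hsurj₁⟩, rfl, hev₁⟩,
    ⟨k₂, e₂, v₂, he₂, ⟨hv₂, hsurj₂⟩, rfl, hev₂⟩,
    Set.disjoint_left.mpr hdisj, ?_⟩
  apply Set.eq_univ_of_forall
  intro a
  rcases hcover a with h | h
  · exact Set.mem_union_left _ h
  · exact Set.mem_union_right _ h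


end AuxProofs

/-- For an Eulerian digraph `G` in which every node has in-degree `2` and
out-degree `2`, with `P` the 0/1-circulation polytope of `G`, the circuit distance from the
zero flow `0` to the full flow `1` equals `2` if and only if `G` decomposes into two simple
Hamiltonian dicycles. -/
theorem circuit_distance_two_iff_two_hamiltonian_dicycles
    {N α : Type*} [Fintype N] [Fintype α] [DecidableEq N] [DecidableEq α] [Nonempty N]
    (G : Digraph' N α)
    (hdeg : ∀ v : N, inDeg G v = 2 ∧ outDeg G v = 2) :
    sInf {r : ℕ | ∃ (g : Fin r → α → ℝ) (lam : Fin r → ℝ),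
        IsCircuitWalk (incMat G) 0 (boxB α) (boxd α) (0 : α → ℝ) (1 : α → ℝ) r g lam} = 2
      ↔ DecompTwoHamiltonian G := by
  have hout : ∀ w, outDeg G w = 2 := fun w => (hdeg w).2
  set Sset : Set ℕ := {r : ℕ | ∃ (g : Fin r → α → ℝ) (lam : Fin r → ℝ),
      IsCircuitWalk (incMat G) 0 (boxB α) (boxd α) (0 : α → ℝ) (1 : α → ℝ) r g lam} with hSset
  constructor
  · intro hs
    have hne : Sset.Nonempty := by
      by_contra h
      rw [Set.not_nonempty_iff_eq_empty] at h
      rw [h, Nat.sInf_empty] at hs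
      norm_num at hs
    have h2 : 2 ∈ Sset := hs ▸ Nat.sInf_mem hne
    exact decomp_of_walk_two G hout h2
  · intro hdec
    have h2 : 2 ∈ Sset := walk_two_of_decomp G hdec
    refine le_antisymm (Nat.sInf_le h2) ?_
    by_contra hlt
    push_neg at hlt
    have hmem := Nat.sInf_mem ⟨2, h2⟩
    have : sInf Sset = 0 ∨ sInf Sset = 1 := by omega
    rcases this with h | h
    · rw [h] at hmem
      exact no_walk_zero G hout hmem
    · rw [h] at hmem
      exact no_walk_one G hout hmem
end

section
/- Let G be an Eulerian digraph in which every node has in-degree 2 and out-degree 2, let P be the 0/1-circulation polytope of G, let 0 ∈ P be the zero flow, and let 1 ∈ P be the full flow. If ((g_1,λ_1),(g_2,λ_2)) is a sign-compatible circuit decomposition of 1 − 0 of length 2, then both step lengths are maximal, i.e., ((g_1,λ_1),(g_2,λ_2)) is a circuit walk from 0 to 1. -/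
open Matrix

section AuxCirc
variable {N α : Type*} [Fintype N] [Fintype α] [DecidableEq N] [DecidableEq α]

omit [Fintype N] in
lemma incMat_col (G : Digraph' N α) (a : α) (c : ℝ) :
    (incMat G) *ᵥ Pi.single a c = c • (Pi.single (G.src a) 1 - Pi.single (G.dst a) 1) := by
  rw [Matrix.mulVec_single]
  funext w
  simp only [incMat, Matrix.of_apply, Pi.smul_apply, Pi.sub_apply, smul_eq_mul, Pi.single_apply,
    Matrix.col_apply, op_smul_eq_mul]
  by_cases h1 : G.src a = w
  · have h2 : ¬ G.dst a = w := fun h => G.loopless a (h1.trans h.symm)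
    rw [if_pos h1, if_pos h1.symm, if_neg (fun h : w = G.dst a => h2 h.symm)]; ring
  · rw [if_neg h1, if_neg (fun h : w = G.src a => h1 h.symm)]
    by_cases h2 : G.dst a = w
    · rw [if_pos h2, if_pos h2.symm]; ring
    · rw [if_neg h2, if_neg (fun h : w = G.dst a => h2 h.symm)]; ring

lemma exists_small_circ [Nonempty N] (G : Digraph' N α)
    (hdeg : ∀ v : N, outDeg G v = 2) :
    ∃ x : α → ℝ, (incMat G) *ᵥ x = 0 ∧ x ≠ 0 ∧ ∃ a, x a = 0 := by
  have hout : ∀ v : N, ∃ a : α, G.src a = v := by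
    intro v
    have h2 : (Finset.univ.filter fun a => G.src a = v).card = 2 := hdeg v
    have : (Finset.univ.filter fun a => G.src a = v).Nonempty := by
      rw [← Finset.card_pos, h2]; norm_num
    obtain ⟨a, ha⟩ := this
    exact ⟨a, (Finset.mem_filter.mp ha).2⟩
  choose f hf using hout
  let vs : ℕ → N := fun k => Nat.rec (Classical.arbitrary N) (fun _ w => G.dst (f w)) k
  have hvs : ∀ k, vs (k + 1) = G.dst (f (vs k)) := fun k => rfl
  have hcard : Fintype.card N < Fintype.card (Fin (Fintype.card N + 1)) := by simp
  obtain ⟨i, j, hij, heq⟩ := Fintype.exists_ne_map_eq_of_card_lt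
    (fun k : Fin (Fintype.card N + 1) => vs k) hcard
  obtain ⟨i, j, hij, heq⟩ : ∃ i j : ℕ, i < j ∧ vs i = vs j := by
    rcases lt_or_gt_of_ne (Fin.val_ne_of_ne hij) with h | h
    · exact ⟨i, j, h, heq⟩
    · exact ⟨j, i, h, heq.symm⟩
  set x : α → ℝ := ∑ k ∈ Finset.Ico i j, Pi.single (f (vs k)) (1 : ℝ) with hx
  refine ⟨x, ?_, ?_, ?_⟩
  · have hmap := map_sum ((incMat G).mulVecLin)
      (fun k => Pi.single (f (vs k)) (1:ℝ)) (Finset.Ico i j)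
    simp only [Matrix.mulVecLin_apply] at hmap
    have : (incMat G) *ᵥ x = ∑ k ∈ Finset.Ico i j,
        (Pi.single (vs k) (1:ℝ) - Pi.single (vs (k+1)) 1) := by
      rw [hx, hmap]
      refine Finset.sum_congr rfl fun k _ => ?_
      rw [incMat_col, hf, ← hvs, one_smul]
    rw [this]
    have htel : ∀ F : ℕ → (N → ℝ), ∀ m n : ℕ, m ≤ n →
        ∑ k ∈ Finset.Ico m n, (F k - F (k+1)) = F m - F n := by
      intro F m n hmn
      have h' : ∑ k ∈ Finset.Ico m n, (F (k+1) - F k) = F n - F m := by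
        rw [Finset.sum_Ico_eq_sub _ hmn, Finset.sum_range_sub, Finset.sum_range_sub]
        abel
      calc ∑ k ∈ Finset.Ico m n, (F k - F (k+1))
          = -∑ k ∈ Finset.Ico m n, (F (k+1) - F k) := by
            rw [← Finset.sum_neg_distrib]; exact Finset.sum_congr rfl fun k _ => by abel
        _ = F m - F n := by rw [h']; abel
    rw [htel _ i j hij.le, show vs i = vs j from heq]
    abel
  · intro h0
    have h1 : x (f (vs i)) = 0 := by rw [h0]; rfl
    have hnn : ∀ k ∈ Finset.Ico i j, (0:ℝ) ≤ (Pi.single (f (vs k)) (1:ℝ) : α → ℝ) (f (vs i)) := by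
      intro k _
      rcases eq_or_ne (f (vs k)) (f (vs i)) with h | h
      · rw [h, Pi.single_eq_same]; norm_num
      · rw [Pi.single_eq_of_ne h.symm]
    have hle := Finset.single_le_sum hnn (Finset.mem_Ico.mpr ⟨le_refl i, hij⟩)
    rw [Pi.single_eq_same] at hle
    have hxeval : x (f (vs i)) = ∑ k ∈ Finset.Ico i j,
        (Pi.single (f (vs k)) (1:ℝ) : α → ℝ) (f (vs i)) := by
      rw [hx]; simp [Finset.sum_apply]
    rw [h1] at hxeval
    linarith
  · have hcard2 : Fintype.card N < Fintype.card α := by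
      have h1 : Fintype.card α = ∑ v : N, (Finset.univ.filter fun a => G.src a = v).card := by
        rw [← Finset.card_univ]
        exact Finset.card_eq_sum_card_fiberwise (fun a _ => Finset.mem_univ (G.src a))
      have h1' : Fintype.card α = ∑ v : N, outDeg G v := h1
      have h2 : ∑ v : N, outDeg G v = 2 * Fintype.card N := by
        rw [Finset.sum_congr rfl (fun v _ => hdeg v)]
        simp [Finset.sum_const, Finset.card_univ, mul_comm]
      have h3 : 0 < Fintype.card N := Fintype.card_pos
      omega
    obtain ⟨a, ha⟩ : ∃ a : α, ∀ v, f v ≠ a := by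
      by_contra h
      push_neg at h
      exact absurd (Fintype.card_le_of_surjective f (fun a => h a)) (by omega)
    refine ⟨a, ?_⟩
    rw [hx]
    simp only [Finset.sum_apply]
    exact Finset.sum_eq_zero fun k _ => Pi.single_eq_of_ne (Ne.symm (ha (vs k))) _

end AuxCirc

/-- For an Eulerian digraph `G` in which every node has in-degree `2` and
out-degree `2`, any sign-compatible circuit decomposition of `1 - 0` of length `2` in the
0/1-circulation polytope of `G` has maximal step lengths, i.e. it is a circuit walk from the
zero flow `0` to the full flow `1`. -/
theorem sc_decomp_length_two_is_circuit_walk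
    {N α : Type*} [Fintype N] [Fintype α] [DecidableEq N] [DecidableEq α] [Nonempty N]
    (G : Digraph' N α)
    (hdeg : ∀ v : N, inDeg G v = 2 ∧ outDeg G v = 2)
    (g : Fin 2 → α → ℝ) (lam : Fin 2 → ℝ)
    (hsc : IsSCDecomp (incMat G) (boxB α) ((1 : α → ℝ) - (0 : α → ℝ)) 2 g lam) :
    IsCircuitWalk (incMat G) 0 (boxB α) (boxd α) (0 : α → ℝ) (1 : α → ℝ) 2 g lam := by
  obtain ⟨hcirc, hpos, hsum, hcompat⟩ := hsc
  have hbox : ∀ u : α → ℝ, (boxB α).mulVec u = Sum.elim u (-u) := by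
    intro u
    rw [show boxB α = Matrix.fromRows 1 (-1) from rfl, Matrix.fromRows_mulVec,
      Matrix.one_mulVec, Matrix.neg_mulVec, Matrix.one_mulVec]
  have hsum1 : lam 0 • g 0 + lam 1 • g 1 = (1 : α → ℝ) := by
    have h := hsum
    rw [Fin.sum_univ_two] at h
    simpa using h
  have h1 : ∀ a, lam 0 * g 0 a + lam 1 * g 1 a = 1 := by
    intro a
    have := congrFun hsum1 a
    simpa using this
  have hlam0 := hpos 0
  have hlam1 := hpos 1
  have hsgn : ∀ a, 0 ≤ g 0 a * g 1 a := by
    intro a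
    have h := hcompat 0 1 (Sum.inl a)
    rwa [hbox, hbox] at h
  have hnn : ∀ a, 0 ≤ g 0 a ∧ 0 ≤ g 1 a := by
    intro a
    constructor <;> nlinarith [hsgn a, h1 a, sq_nonneg (g 0 a), sq_nonneg (g 1 a)]
  have h0le1 : ∀ a, lam 0 * g 0 a ≤ 1 := by
    intro a
    nlinarith [h1 a, (hnn a).2]
  have h0nn : ∀ a, 0 ≤ lam 0 * g 0 a := fun a => mul_nonneg hlam0.le (hnn a).1
  have hker : ∀ i : Fin 2, (incMat G).mulVec (g i) = 0 := fun i => (hcirc i).1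
  have hzero : ∀ i : Fin 2, ∃ a, g i a = 0 := by
    intro i
    by_contra hno
    push_neg at hno
    obtain ⟨x, hx1, hx2, a0, hx3⟩ := exists_small_circ G (fun v => (hdeg v).2)
    refine (hcirc i).2.2.2 x hx1 hx2 ?_
    have huniv : Function.support ((boxB α).mulVec (g i)) = Set.univ := by
      rw [hbox]
      ext s
      simp only [Set.mem_univ, iff_true, Function.mem_support]
      cases s with
      | inl a => exact hno a
      | inr a => simpa using hno a
    rw [huniv, Set.ssubset_univ_iff]
    intro hall
    have hm : (boxB α).mulVec x (Sum.inl a0) ≠ 0 := by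
      rw [← Function.mem_support, hall]; trivial
    apply hm
    rw [hbox]; exact hx3
  obtain ⟨a0, ha0⟩ := hzero 1
  obtain ⟨a1, ha1⟩ := hzero 0
  have key0 : lam 0 * g 0 a0 = 1 := by have := h1 a0; rw [ha0] at this; linarith
  have key1 : lam 1 * g 1 a1 = 1 := by have := h1 a1; rw [ha1] at this; linarith
  have hg0pos : 0 < g 0 a0 := by nlinarith [key0, (hnn a0).1]
  have hg1pos : 0 < g 1 a1 := by nlinarith [key1, (hnn a1).1]
  have hInPoly0 : InPoly (incMat G) 0 (boxB α) (boxd α) (lam 0 • g 0) := by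
    constructor
    · rw [Matrix.mulVec_smul, hker 0]; simp
    · rw [hbox]
      intro s
      cases s with
      | inl a => simpa [boxd] using h0le1 a
      | inr a => simpa [boxd] using h0nn a
  have hInPoly1 : InPoly (incMat G) 0 (boxB α) (boxd α) (1 : α → ℝ) := by
    constructor
    · have h := congrArg (incMat G).mulVec hsum1
      rw [Matrix.mulVec_add, Matrix.mulVec_smul, Matrix.mulVec_smul, hker 0, hker 1] at h
      simpa using h.symm
    · rw [hbox]
      intro s
      cases s <;> simp [boxd]
  have hfle0 : (Finset.univ.filter (fun i : Fin 2 => i ≤ 0)) = {0} := by decide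
  have hfle1 : (Finset.univ.filter (fun i : Fin 2 => i ≤ 1)) = Finset.univ := by decide
  have hflt0 : (Finset.univ.filter (fun i : Fin 2 => i < 0)) = ∅ := by decide
  have hflt1 : (Finset.univ.filter (fun i : Fin 2 => i < 1)) = {0} := by decide
  refine ⟨hcirc, hpos, ?_, ?_, ?_⟩
  · intro k
    fin_cases k
    · simp only [Fin.zero_eta, Fin.isValue]
      rw [hfle0, Finset.sum_singleton, zero_add]
      exact hInPoly0
    · simp only [Fin.mk_one, Fin.isValue]
      rw [hfle1, zero_add, hsum]
      simpa using hInPoly1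
  · rw [zero_add, hsum]; simp
  · intro k mu hmu
    fin_cases k
    · simp only [Fin.zero_eta, Fin.isValue] at hmu ⊢
      rw [hflt0, Finset.sum_empty, add_zero, zero_add]
      rintro ⟨-, hB⟩
      have hb := hB (Sum.inl a0)
      rw [congrFun (hbox (mu • g 0)) (Sum.inl a0)] at hb
      simp only [Sum.elim_inl, Pi.smul_apply, smul_eq_mul, boxd] at hb
      nlinarith [key0, hg0pos, hb]
    · simp only [Fin.mk_one, Fin.isValue] at hmu ⊢
      rw [hflt1, Finset.sum_singleton, zero_add]
      rintro ⟨-, hB⟩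
      have hb := hB (Sum.inl a1)
      rw [congrFun (hbox (lam 0 • g 0 + mu • g 1)) (Sum.inl a1)] at hb
      simp only [Sum.elim_inl, Pi.add_apply, Pi.smul_apply, smul_eq_mul, boxd, ha1,
        mul_zero, zero_add] at hb
      nlinarith [key1, hg1pos, hb]
end

section
/- Let p ∈ (1,∞), let n ≥ 2 be a real number, let r ≥ 1 be an integer, and let z_1, …, z_r be real numbers with 2 ≤ z_i ≤ n for every i, Σ_{i=1}^r z_i ≥ 2n, and z_j < n for at least one index j. Then z_1^{1/p} + ⋯ + z_r^{1/p} > 2·n^{1/p}. -/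
/-- Let `1 < p`, let `n ≥ 2` be a real number, `r ≥ 1` an integer, and let
`z₁, …, z_r` be reals with `2 ≤ zᵢ ≤ n` for all `i`, `∑ zᵢ ≥ 2n`, and `z_j < n` for at
least one `j`.  Then `z₁^{1/p} + ⋯ + z_r^{1/p} > 2 n^{1/p}`. -/
theorem sum_rpow_gt_of_not_two_hamiltonian
    (p : ℝ) (hp : 1 < p) (n : ℝ) (hn : 2 ≤ n) (r : ℕ) (hr : 1 ≤ r)
    (z : Fin r → ℝ) (hz2 : ∀ i, 2 ≤ z i) (hzn : ∀ i, z i ≤ n)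
    (hsum : 2 * n ≤ ∑ i, z i) (hj : ∃ j, z j < n) :
    2 * n ^ (1 / p) < ∑ i, z i ^ (1 / p) := by
  obtain ⟨j, hjn⟩ := hj
  have hp0 : (0:ℝ) < p := lt_trans one_pos hp
  set α : ℝ := 1 / p with hα
  have hα1 : α - 1 < 0 := by
    have : α < 1 := by
      rw [hα, div_lt_one hp0]; exact hp
    linarith
  have hn0 : (0:ℝ) < n := lt_of_lt_of_le two_pos hn
  have hzpos : ∀ i, (0:ℝ) < z i := fun i => lt_of_lt_of_le two_pos (hz2 i)
  have key : ∀ i, z i * n ^ (α - 1) ≤ z i ^ α := by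
    intro i
    have h1 : n ^ (α - 1) ≤ (z i) ^ (α - 1) :=
      Real.rpow_le_rpow_of_nonpos (hzpos i) (hzn i) hα1.le
    calc z i * n ^ (α - 1) ≤ z i * (z i) ^ (α - 1) := by
          exact mul_le_mul_of_nonneg_left h1 (hzpos i).le
      _ = z i ^ α := by
          rw [show α = 1 + (α - 1) by ring, Real.rpow_add (hzpos i), Real.rpow_one]; ring_nf
  have keyj : z j * n ^ (α - 1) < z j ^ α := by
    have h1 : n ^ (α - 1) < (z j) ^ (α - 1) :=
      Real.rpow_lt_rpow_of_neg (hzpos j) hjn hα1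
    calc z j * n ^ (α - 1) < z j * (z j) ^ (α - 1) := by
          exact mul_lt_mul_of_pos_left h1 (hzpos j)
      _ = z j ^ α := by
          rw [show α = 1 + (α - 1) by ring, Real.rpow_add (hzpos j), Real.rpow_one]; ring_nf
  have hlt : ∑ i, z i * n ^ (α - 1) < ∑ i, z i ^ α := by
    refine Finset.sum_lt_sum (fun i _ => key i) ⟨j, Finset.mem_univ j, keyj⟩
  have heq : ∑ i, z i * n ^ (α - 1) = (∑ i, z i) * n ^ (α - 1) :=
    (Finset.sum_mul ..).symm
  have hfinal : 2 * n ^ α ≤ (∑ i, z i) * n ^ (α - 1) := by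
    have h2 : 2 * n ^ α = (2 * n) * n ^ (α - 1) := by
      rw [show α = 1 + (α - 1) by ring, Real.rpow_add hn0, Real.rpow_one]
      ring
    rw [h2]
    exact mul_le_mul_of_nonneg_right hsum (Real.rpow_nonneg hn0.le _)
  calc 2 * n ^ α ≤ (∑ i, z i) * n ^ (α - 1) := hfinal
    _ = ∑ i, z i * n ^ (α - 1) := heq.symm
    _ < ∑ i, z i ^ α := hlt
end

section
/- Let P = {x ∈ ℝ^n : Bx ≤ d} be a rational polytope, c ∈ ℝ^n, and ω_0 = min{c^T x : x ∈ P}. Let ε > 0 and assume: (i) every vertex w of P with c^T w > ω_0 satisfies c^T w > ω_0 + ε; (ii) P has the vertex-walk property, i.e., for every vertex u of P and every circuit g of P feasible at u, maxstep(u,g;P) is a vertex of P; (iii) the facet F = {x ∈ P_ε : c^T x = ω_0 + ε} of P_ε := P ∩ {x : c^T x ≥ ω_0 + ε} contains no vertex of P. Let v be a vertex of P with c^T v > ω_0 + ε (so v is a vertex of P_ε). If g is a circuit of P_ε (with respect to the description of P with the added row −c^T x ≤ −(ω_0 + ε)) such that maxstep(v,g;P_ε) ∈ F, then g is a circuit of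 P and maxstep(v,g;P) lies in the optimal face {x ∈ P : c^T x = ω_0}. -/
open Matrix

/-- The polyhedron `{x : B x ≤ d}`. -/
def PolyIneq {mB n : Type*} [Fintype n] (B : Matrix mB n ℝ) (d : mB → ℝ) : Set (n → ℝ) :=
  {x | B.mulVec x ≤ d}

/-- `g` is a circuit of the polyhedron `{x : B x ≤ d}` with respect to the description `B`
(no equality constraints): a nonzero vector with coprime integral components such that `B g`
is support-minimal among `{B x : x ≠ 0}`. -/
def IsCircuitI {mB n : Type*} [Fintype n] (B : Matrix mB n ℝ) (g : n → ℝ) : Prop :=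
  g ≠ 0 ∧
  (∃ z : n → ℤ, (∀ i, (z i : ℝ) = g i) ∧ Finset.univ.gcd z = 1) ∧
  ∀ x : n → ℝ, x ≠ 0 →
    ¬ (Function.support (B.mulVec x) ⊂ Function.support (B.mulVec g))

/-- A (maximal) circuit walk from `x` to `y` in the polyhedron `{x : B x ≤ d}`. -/
def IsCircuitWalkI {mB n : Type*} [Fintype n] (B : Matrix mB n ℝ) (d : mB → ℝ)
    (x y : n → ℝ) (r : ℕ) (g : Fin r → n → ℝ) (lam : Fin r → ℝ) : Prop :=
  (∀ i, IsCircuitI B (g i)) ∧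
  (∀ i, 0 < lam i) ∧
  (∀ k : Fin r, (x + ∑ i ∈ Finset.univ.filter (fun i => i ≤ k), lam i • g i) ∈ PolyIneq B d) ∧
  (x + ∑ i, lam i • g i = y) ∧
  (∀ k : Fin r, ∀ mu : ℝ, lam k < mu →
    ((x + ∑ i ∈ Finset.univ.filter (fun i => i < k), lam i • g i) + mu • g k) ∉ PolyIneq B d)

/-- Sign-compatible circuit decomposition of the vector `u` with respect to `B`. -/
def IsSCDecompI {mB n : Type*} [Fintype n] (B : Matrix mB n ℝ) (u : n → ℝ)
    (r : ℕ) (g : Fin r → n → ℝ) (lam : Fin r → ℝ) : Prop :=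
  (∀ i, IsCircuitI B (g i)) ∧ (∀ i, 0 < lam i) ∧ (∑ i, lam i • g i = u) ∧
  ∀ i j, SignCompat B (g i) (g j)

/-- A face of the polyhedron `{x : B x ≤ d}`: the subset where some set of the inequalities
is required to be tight. -/
def IsFaceOf {mB n : Type*} [Fintype n] (B : Matrix mB n ℝ) (d : mB → ℝ)
    (F : Set (n → ℝ)) : Prop :=
  ∃ I : Set mB, F = {x | B.mulVec x ≤ d ∧ ∀ i ∈ I, B.mulVec x i = d i}

/-- `F` is the minimal face of `{x : B x ≤ d}` containing `v` and `w`. -/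
def IsMinFaceOf {mB n : Type*} [Fintype n] (B : Matrix mB n ℝ) (d : mB → ℝ)
    (v w : n → ℝ) (F : Set (n → ℝ)) : Prop :=
  IsFaceOf B d F ∧ v ∈ F ∧ w ∈ F ∧
  ∀ F' : Set (n → ℝ), IsFaceOf B d F' → v ∈ F' → w ∈ F' → F ⊆ F'

/-- `F` is a parallelotope of dimension `k`: a translate of the Minkowski sum of `k` line
segments with linearly independent directions. -/
def IsParallelotopeOfDim {n : Type*} [Fintype n] (F : Set (n → ℝ)) (k : ℕ) : Prop :=
  ∃ (t : n → ℝ) (u : Fin k → n → ℝ), LinearIndependent ℝ u ∧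
    F = {x | ∃ c : Fin k → ℝ, (∀ i, c i ∈ Set.Icc (0 : ℝ) 1) ∧ x = t + ∑ i, c i • u i}

/-- `{x : B x ≤ d}` is an `(n, dd)`-parallelotope: for every pair of vertices the minimal
face containing them is a parallelotope of dimension at most `dd`, and dimension `dd` is
attained for some pair of vertices. -/
def IsNDParallelotope {mB n : Type*} [Fintype n] (B : Matrix mB n ℝ) (d : mB → ℝ)
    (dd : ℕ) : Prop :=
  (∀ v ∈ Set.extremePoints ℝ (PolyIneq B d), ∀ w ∈ Set.extremePoints ℝ (PolyIneq B d),
    ∀ F : Set (n → ℝ), IsMinFaceOf B d v w F → ∃ k ≤ dd, IsParallelotopeOfDim F k) ∧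
  (∃ v ∈ Set.extremePoints ℝ (PolyIneq B d), ∃ w ∈ Set.extremePoints ℝ (PolyIneq B d),
    ∃ F : Set (n → ℝ), IsMinFaceOf B d v w F ∧ IsParallelotopeOfDim F dd)

/-- Let `P = {x : B x ≤ d}` be a polytope, `ω₀ = min {cᵀx : x ∈ P}`, and
`ε > 0` with: (i) every vertex `w` of `P` with `cᵀw > ω₀` satisfies `cᵀw > ω₀ + ε`;
(ii) `P` has the vertex-walk property; (iii) the facet `F = {x ∈ P_ε : cᵀx = ω₀ + ε}` of
`P_ε = P ∩ {x : cᵀx ≥ ω₀ + ε}` contains no vertex of `P`.  If `v` is a vertex of `P` with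
`cᵀv > ω₀ + ε` and `g` is a circuit of `P_ε` (w.r.t. the description of `P` with the added
row `−cᵀx ≤ −(ω₀ + ε)`) whose maximal step from `v` in `P_ε` lands in `F`, then `g` is a
circuit of `P` and the maximal step from `v` in `P` lands in the optimal face
`{x ∈ P : cᵀx = ω₀}`. -/
theorem circuit_step_into_facet_of_truncation
    {mB n : Type*} [Fintype mB] [Fintype n]
    (B : Matrix mB n ℝ) (d : mB → ℝ) (c : n → ℝ) (ω₀ ε : ℝ) (hε : 0 < ε)
    (hbdd : Bornology.IsBounded (PolyIneq B d)) (hne : (PolyIneq B d).Nonempty)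
    (hω : IsLeast ((fun x => c ⬝ᵥ x) '' PolyIneq B d) ω₀)
    (Pε : Set (n → ℝ)) (hPε : Pε = {x ∈ PolyIneq B d | ω₀ + ε ≤ c ⬝ᵥ x})
    (F : Set (n → ℝ)) (hF : F = {x ∈ Pε | c ⬝ᵥ x = ω₀ + ε})
    (h1 : ∀ w ∈ Set.extremePoints ℝ (PolyIneq B d), ω₀ < c ⬝ᵥ w → ω₀ + ε < c ⬝ᵥ w)
    (h2 : ∀ u ∈ Set.extremePoints ℝ (PolyIneq B d), ∀ g : n → ℝ, IsCircuitI B g →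
      (∃ δ : ℝ, 0 < δ ∧ u + δ • g ∈ PolyIneq B d) →
      ∀ lam : ℝ, IsGreatest {μ : ℝ | 0 ≤ μ ∧ u + μ • g ∈ PolyIneq B d} lam →
        u + lam • g ∈ Set.extremePoints ℝ (PolyIneq B d))
    (h3 : ∀ x ∈ F, x ∉ Set.extremePoints ℝ (PolyIneq B d))
    (v : n → ℝ) (hv : v ∈ Set.extremePoints ℝ (PolyIneq B d)) (hvc : ω₀ + ε < c ⬝ᵥ v)
    (g : n → ℝ)
    (hg : IsCircuitI (Matrix.fromRows B (Matrix.of fun (_ : Unit) => -c)) g)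
    (lam : ℝ) (hlam : IsGreatest {μ : ℝ | 0 ≤ μ ∧ v + μ • g ∈ Pε} lam)
    (hstep : v + lam • g ∈ F) :
    IsCircuitI B g ∧
    ∃ lam' : ℝ, IsGreatest {μ : ℝ | 0 ≤ μ ∧ v + μ • g ∈ PolyIneq B d} lam' ∧
      v + lam' • g ∈ PolyIneq B d ∧ c ⬝ᵥ (v + lam' • g) = ω₀ := by

  classical
  obtain ⟨hg0, hgz, hgmin⟩ := hg
  -- basic facts
  have hvP : v ∈ PolyIneq B d := hv.1
  have hPεsub : Pε ⊆ PolyIneq B d := by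
    rw [hPε]; intro x hx; exact hx.1
  have hlam0 : 0 ≤ lam := hlam.1.1
  have hstepPε : v + lam • g ∈ Pε := hlam.1.2
  have hstepc : c ⬝ᵥ (v + lam • g) = ω₀ + ε := by
    rw [hF] at hstep; exact hstep.2
  have hkey : c ⬝ᵥ v + lam * (c ⬝ᵥ g) = ω₀ + ε := by
    rw [← hstepc]; simp [dotProduct_add, dotProduct_smul, smul_eq_mul]
  have hlcg : lam * (c ⬝ᵥ g) < 0 := by linarith
  have hcg : c ⬝ᵥ g < 0 := by nlinarith
  have hlampos : 0 < lam := by nlinarith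
  -- g is a circuit of B
  have hcirc : IsCircuitI B g := by
    refine ⟨hg0, hgz, ?_⟩
    intro x hx hss
    refine hgmin x hx ?_
    rw [Matrix.fromRows_mulVec, Matrix.fromRows_mulVec]
    constructor
    · intro s hs
      cases s with
      | inl i =>
        simp only [Function.mem_support, Sum.elim_inl] at hs ⊢
        exact hss.1 hs
      | inr u =>
        simp only [Function.mem_support, Sum.elim_inr]
        have : (Matrix.of fun (_ : Unit) => -c).mulVec g u = -(c ⬝ᵥ g) := by
          simp [Matrix.mulVec, dotProduct, neg_mul, Finset.sum_neg_distrib]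
        rw [this]
        intro h
        rw [neg_eq_zero] at h
        exact absurd h (ne_of_lt hcg)
    · intro hsub
      obtain ⟨j, hjg, hjx⟩ := Set.not_subset.mp hss.2
      have : (Sum.inl j : mB ⊕ Unit) ∈ Function.support
          (Sum.elim (B.mulVec g) ((Matrix.of fun (_ : Unit) => -c).mulVec g)) := by
        simpa using hjg
      have := hsub this
      simp only [Function.mem_support, Sum.elim_inl] at this
      exact hjx this
  refine ⟨hcirc, ?_⟩
  -- P is closed
  have hPclosed : IsClosed (PolyIneq B d) := by
    have hrw : PolyIneq B d = ⋂ i, {x : n → ℝ | B.mulVec x i ≤ d i} := by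
      ext x
      simp [PolyIneq, Set.mem_iInter, Pi.le_def]
    rw [hrw]
    refine isClosed_iInter fun i => isClosed_le ?_ continuous_const
    have : Continuous fun x : n → ℝ => B i ⬝ᵥ x := by
      unfold dotProduct
      exact continuous_finset_sum _ fun j _ => (continuous_const.mul (continuous_apply j))
    exact this
  -- the step set S
  set S : Set ℝ := {μ : ℝ | 0 ≤ μ ∧ v + μ • g ∈ PolyIneq B d} with hS
  have hScl : IsClosed S := by
    have : S = {μ : ℝ | 0 ≤ μ} ∩ ((fun μ : ℝ => v + μ • g) ⁻¹' PolyIneq B d) := rfl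
    rw [this]
    exact (isClosed_le continuous_const continuous_id).inter
      (hPclosed.preimage (by continuity))
  obtain ⟨R, hR⟩ := hbdd.exists_norm_le
  have hgn : 0 < ‖g‖ := norm_pos_iff.mpr hg0
  have hSbdd : S ⊆ Set.Icc 0 ((R + ‖v‖) / ‖g‖) := by
    intro μ ⟨hμ0, hμP⟩
    refine ⟨hμ0, ?_⟩
    have h1' : ‖μ • g‖ ≤ R + ‖v‖ := by
      have := hR _ hμP
      calc ‖μ • g‖ = ‖(v + μ • g) - v‖ := by ring_nf
        _ ≤ ‖v + μ • g‖ + ‖v‖ := norm_sub_le _ _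
        _ ≤ R + ‖v‖ := by linarith
    have h2' : μ * ‖g‖ ≤ R + ‖v‖ := by
      have : ‖μ • g‖ = |μ| * ‖g‖ := by rw [norm_smul, Real.norm_eq_abs]
      rw [this, abs_of_nonneg hμ0] at h1'
      exact h1'
    exact (le_div_iff₀ hgn).mpr h2'
  have hScompact : IsCompact S :=
    (isCompact_Icc).of_isClosed_subset hScl hSbdd
  have hSne : S.Nonempty := ⟨0, le_refl 0, by simpa using hvP⟩
  obtain ⟨lam', hlam'⟩ := hScompact.exists_isGreatest hSne
  refine ⟨lam', hlam', hlam'.1.2, ?_⟩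
  -- w is an extreme point by the vertex-walk property
  have hw : v + lam' • g ∈ Set.extremePoints ℝ (PolyIneq B d) :=
    h2 v hv g hcirc ⟨lam, hlampos, hPεsub hstepPε⟩ lam' hlam'
  -- final argument
  have hwP : v + lam' • g ∈ PolyIneq B d := hlam'.1.2
  have hwge : ω₀ ≤ c ⬝ᵥ (v + lam' • g) := hω.2 ⟨_, hwP, rfl⟩
  by_contra hne'
  have hwgt : ω₀ < c ⬝ᵥ (v + lam' • g) := lt_of_le_of_ne hwge (Ne.symm hne')
  have hwgt' : ω₀ + ε < c ⬝ᵥ (v + lam' • g) := h1 _ hw hwgt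
  have hlam'le : lam' ≤ lam := hlam.2 ⟨hlam'.1.1, by rw [hPε]; exact ⟨hwP, le_of_lt hwgt'⟩⟩
  have hlamle : lam ≤ lam' := hlam'.2 ⟨hlam0, hPεsub hstepPε⟩
  have heq : lam' = lam := le_antisymm hlam'le hlamle
  rw [heq] at hw
  exact h3 _ hstep hw
end

section
/- Let P = {x ∈ ℝ^n : Ax = b, Bx ≤ d} be a rational polyhedron and let x, y ∈ P. (a) Every sign-compatible circuit decomposition ((g_1,λ_1),…,(g_r,λ_r)) of y − x satisfies Σ_{i=1}^r ‖λ_i B g_i‖_1 = ‖B(y − x)‖_1. (b) Every finite list ((g_1,λ_1),…,(g_r,λ_r)) with each g_i a circuit of P, each λ_i > 0, and Σ_{i=1}^r λ_i g_i = y − x satisfies Σ_{i=1}^r ‖λ_i B g_i‖_1 ≥ ‖B(y − x)‖_1. Hence any sign-compatible circuit decomposition (in particular, any sign-compatible circuit walk) minimizes Σ_{i=1}^r ‖λ_i B g_i‖_1. -/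
open Matrix

lemma abs_sum_of_pairwise_mul_nonneg {r : ℕ} (f : Fin r → ℝ)
    (h : ∀ i j, 0 ≤ f i * f j) : |∑ i, f i| = ∑ i, |f i| := by
  by_cases hpos : ∃ k, 0 < f k
  · obtain ⟨k, hk⟩ := hpos
    have hall : ∀ i, 0 ≤ f i := fun i => by nlinarith [h i k]
    rw [abs_of_nonneg (Finset.sum_nonneg fun i _ => hall i)]
    exact Finset.sum_congr rfl fun i _ => (abs_of_nonneg (hall i)).symm
  · push_neg at hpos
    have hsum : ∑ i, f i ≤ 0 := Finset.sum_nonpos fun i _ => hpos i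
    rw [abs_of_nonpos hsum, ← Finset.sum_neg_distrib]
    exact Finset.sum_congr rfl fun i _ => (abs_of_nonpos (hpos i)).symm

/-- Let `P = {x : A x = b, B x ≤ d}` be a polyhedron and `x, y ∈ P`.
(a) Every sign-compatible circuit decomposition of `y − x` satisfies
`∑ᵢ ‖λᵢ B gᵢ‖₁ = ‖B (y − x)‖₁`.
(b) Every list of circuits `gᵢ` with positive multipliers `λᵢ` summing to `y − x` satisfies
`∑ᵢ ‖λᵢ B gᵢ‖₁ ≥ ‖B (y − x)‖₁`.
Hence any sign-compatible circuit decomposition minimizes `∑ᵢ ‖λᵢ B gᵢ‖₁`. -/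
theorem sc_decomp_minimizes_one_norm
    {mA mB n : Type*} [Fintype mA] [Fintype mB] [Fintype n]
    (A : Matrix mA n ℝ) (b : mA → ℝ) (B : Matrix mB n ℝ) (d : mB → ℝ)
    (x y : n → ℝ) (hx : InPoly A b B d x) (hy : InPoly A b B d y) :
    (∀ (r : ℕ) (g : Fin r → n → ℝ) (lam : Fin r → ℝ),
      IsSCDecomp A B (y - x) r g lam →
      ∑ i, (∑ j, |B.mulVec (lam i • g i) j|) = ∑ j, |B.mulVec (y - x) j|) ∧
    (∀ (r : ℕ) (g : Fin r → n → ℝ) (lam : Fin r → ℝ),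
      (∀ i, IsCircuit A B (g i)) → (∀ i, 0 < lam i) → (∑ i, lam i • g i = y - x) →
      ∑ j, |B.mulVec (y - x) j| ≤ ∑ i, (∑ j, |B.mulVec (lam i • g i) j|)) := by
  have key : ∀ (r : ℕ) (g : Fin r → n → ℝ) (lam : Fin r → ℝ),
      (∑ i, lam i • g i = y - x) →
      ∀ j, B.mulVec (y - x) j = ∑ i, B.mulVec (lam i • g i) j := by
    intro r g lam hsum j
    rw [← hsum]
    have := map_sum B.mulVecLin (fun i => lam i • g i) Finset.univ
    simp only [Matrix.mulVecLin_apply] at this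
    rw [this, Finset.sum_apply]
  constructor
  · rintro r g lam ⟨hc, hl, hsum, hsc⟩
    rw [Finset.sum_comm]
    refine Finset.sum_congr rfl fun j _ => ?_
    rw [key r g lam hsum j,
      abs_sum_of_pairwise_mul_nonneg (fun i => B.mulVec (lam i • g i) j)]
    intro i i'
    have h1 : B.mulVec (lam i • g i) j = lam i * B.mulVec (g i) j := by
      rw [Matrix.mulVec_smul]; rfl
    have h2 : B.mulVec (lam i' • g i') j = lam i' * B.mulVec (g i') j := by
      rw [Matrix.mulVec_smul]; rfl
    rw [h1, h2]
    have h3 := mul_nonneg (mul_pos (hl i) (hl i')).le (hsc i i' j)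
    nlinarith [h3]
  · intro r g lam hc hl hsum
    rw [Finset.sum_comm]
    refine Finset.sum_le_sum fun j _ => ?_
    rw [key r g lam hsum j]
    exact Finset.abs_sum_le_sum_abs _ _
end

section
/- Let G = (N,A) be a loopless digraph in which every node has equal in-degree and out-degree, let m = |A|, let P be the 0/1-circulation polytope of G, let 0 ∈ P be the zero flow and 1 ∈ P the full flow. If there exists a list ((g_1,λ_1),…,(g_k,λ_k)) that is simultaneously a circuit walk from 0 to 1 in P and a sign-compatible circuit decomposition of 1 − 0, then G contains a directed cycle with at least m/k arcs. -/
open Matrix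

lemma mulVec_incMat {N α : Type*} [Fintype α] [DecidableEq N] (G : Digraph' N α)
    (x : α → ℝ) (v : N) :
    (incMat G).mulVec x v =
      (∑ a ∈ Finset.univ.filter (fun a => G.src a = v), x a)
      - ∑ a ∈ Finset.univ.filter (fun a => G.dst a = v), x a := by
  have h : ∀ a : α, incMat G v a * x a =
      (if G.src a = v then x a else 0) - (if G.dst a = v then x a else 0) := by
    intro a
    by_cases h1 : G.src a = v
    · have h2 : ¬ G.dst a = v := fun h2 => G.loopless a (h1.trans h2.symm)
      simp [incMat, h1, h2]
    · by_cases h2 : G.dst a = v <;> simp [incMat, h1, h2]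
  simp only [Matrix.mulVec, dotProduct]
  rw [Finset.sum_congr rfl fun a _ => h a, Finset.sum_sub_distrib,
    ← Finset.sum_filter, ← Finset.sum_filter]

lemma exists_next {N α : Type*} [Fintype α] [DecidableEq N] (G : Digraph' N α) (x : α → ℝ)
    (hx0 : ∀ a, 0 ≤ x a) (hker : (incMat G).mulVec x = 0) (a : α) (ha : 0 < x a) :
    ∃ a', G.src a' = G.dst a ∧ 0 < x a' := by
  have h := congrFun hker (G.dst a)
  rw [mulVec_incMat] at h
  simp only [Pi.zero_apply] at h
  have hin : 0 < ∑ a' ∈ Finset.univ.filter (fun a' => G.dst a' = G.dst a), x a' := by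
    refine lt_of_lt_of_le ha (Finset.single_le_sum (fun b _ => hx0 b) ?_)
    simp
  have hout : (∑ a' ∈ Finset.univ.filter (fun a' => G.src a' = G.dst a), x a') ≠ 0 := by
    intro h0; rw [h0] at h; linarith
  obtain ⟨a', ha', hne⟩ := Finset.exists_ne_zero_of_sum_ne_zero hout
  exact ⟨a', (Finset.mem_filter.mp ha').2, lt_of_le_of_ne (hx0 a') (Ne.symm hne)⟩

lemma boxB_mulVec_inl {α : Type*} [Fintype α] [DecidableEq α] (x : α → ℝ) (a : α) :
    (boxB α).mulVec x (Sum.inl a) = x a := by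
  simp [boxB, Matrix.fromRows_mulVec, Matrix.one_mulVec]

lemma boxB_mulVec_inr {α : Type*} [Fintype α] [DecidableEq α] (x : α → ℝ) (a : α) :
    (boxB α).mulVec x (Sum.inr a) = -(x a) := by
  simp [boxB, Matrix.fromRows_mulVec, Matrix.neg_mulVec, Matrix.one_mulVec]

lemma exists_dicycle {N α : Type*} [Fintype N] [Fintype α] [DecidableEq N]
    (G : Digraph' N α) (x : α → ℝ)
    (hx0 : ∀ a, 0 ≤ x a) (hker : (incMat G).mulVec x = 0) (hne : x ≠ 0) :
    ∃ S : Set α, IsSimpleDicycle G S ∧ S ⊆ {a | x a ≠ 0} := by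
  classical
  obtain ⟨a0, ha0⟩ : ∃ a, 0 < x a := by
    by_contra h; push_neg at h
    exact hne (funext fun a => le_antisymm (h a) (hx0 a))
  have step : ∀ a : {a // 0 < x a}, ∃ a' : {a // 0 < x a}, G.src a'.1 = G.dst a.1 := by
    intro a
    obtain ⟨a', h1, h2⟩ := exists_next G x hx0 hker a.1 a.2
    exact ⟨⟨a', h2⟩, h1⟩
  choose F hF using step
  set f : ℕ → {a // 0 < x a} := fun n => F^[n] ⟨a0, ha0⟩ with hfdef
  have hf : ∀ n, G.src (f (n+1)).1 = G.dst (f n).1 := by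
    intro n
    have : f (n+1) = F (f n) := Function.iterate_succ_apply' F n _
    rw [this]; exact hF (f n)
  set u : ℕ → N := fun n => G.src (f n).1 with hudef
  have hrep : ∃ q, ∃ p, p < q ∧ u p = u q := by
    obtain ⟨i, j, hij, hu⟩ := Finite.exists_ne_map_eq_of_infinite u
    rcases lt_or_gt_of_ne hij with h | h
    · exact ⟨j, i, h, hu⟩
    · exact ⟨i, j, h, hu.symm⟩
  set q0 := Nat.find hrep with hq0def
  obtain ⟨p, hpq, hupq⟩ := Nat.find_spec hrep
  have hmin : ∀ j, j < q0 → ¬ ∃ p', p' < j ∧ u p' = u j := fun j hj => Nat.find_min hrep hj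
  have huinj : ∀ i j, i < q0 → j < q0 → u i = u j → i = j := by
    intro i j hi hj hij
    rcases lt_trichotomy i j with h | h | h
    · exact absurd ⟨i, h, hij⟩ (hmin j hj)
    · exact h
    · exact absurd ⟨j, h, hij.symm⟩ (hmin i hi)
  set k := q0 - p - 1 with hkdef
  have hk1 : k + 1 = q0 - p := by omega
  set e : Fin (k+1) → α := fun i => (f (p + i.1)).1 with hedef
  set w : Fin (k+1) → N := fun i => u (p + i.1) with hwdef
  have hplt : ∀ i : Fin (k+1), p + i.1 < q0 := by
    intro i; have := i.2; omega
  have hwinj : Function.Injective w := by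
    intro i j h
    have := huinj _ _ (hplt i) (hplt j) h
    exact Fin.ext (by omega)
  have hsrc : ∀ i, G.src (e i) = w i := fun i => rfl
  have heinj : Function.Injective e := by
    intro i j h
    exact hwinj (by rw [← hsrc, ← hsrc, h])
  have hval : ∀ i : Fin (k+1), ((i + 1 : Fin (k+1))).1 = (i.1 + 1) % (k+1) := by
    intro i
    rw [Fin.val_add, Fin.val_one']
    conv_rhs => rw [Nat.add_mod]
    rw [Nat.mod_eq_of_lt i.2]
  have hdst : ∀ i, G.dst (e i) = w (i + 1) := by
    intro i
    have h1 : G.dst (e i) = u (p + i.1 + 1) := (hf (p + i.1)).symm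
    rw [h1]
    show u (p + i.1 + 1) = u (p + ((i + 1 : Fin (k+1))).1)
    rw [hval i]
    by_cases hc : i.1 + 1 < k + 1
    · rw [Nat.mod_eq_of_lt hc]; ring_nf
    · have : i.1 = k := by have := i.2; omega
      rw [this, Nat.mod_self]
      have : p + k + 1 = q0 := by omega
      rw [show p + (k : ℕ) + 1 = q0 from this]
      exact hupq.symm
  refine ⟨Set.range e, ⟨k, e, w, heinj, hwinj, rfl, fun i => ⟨hsrc i, hdst i⟩⟩, ?_⟩
  rintro a ⟨i, rfl⟩
  exact ne_of_gt (f (p + i.1)).2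

lemma dicycle_circulation {N α : Type*} [Fintype N] [Fintype α] [DecidableEq N] [DecidableEq α]
    (G : Digraph' N α) (k : ℕ) (e : Fin (k+1) → α) (w : Fin (k+1) → N)
    (heinj : Function.Injective e)
    (hprop : ∀ i, G.src (e i) = w i ∧ G.dst (e i) = w (i + 1)) :
    (incMat G).mulVec ((Set.range e).indicator (1 : α → ℝ)) = 0 := by
  classical
  funext v
  rw [mulVec_incMat, Pi.zero_apply, sub_eq_zero]
  have hsum : ∀ s : Finset α, ∑ a ∈ s, (Set.range e).indicator (1 : α → ℝ) a
      = ((s.filter (· ∈ Set.range e)).card : ℝ) := by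
    intro s
    simp only [Set.indicator_apply, Pi.one_apply]
    rw [Finset.sum_boole]
  rw [hsum, hsum]
  congr 1
  have c1 : (Finset.univ.filter (fun i : Fin (k+1) => w i = v)).card
      = ((Finset.univ.filter (fun a => G.src a = v)).filter (· ∈ Set.range e)).card := by
    refine Finset.card_bij (fun i _ => e i) ?_ ?_ ?_
    · intro i hi
      simp only [Finset.mem_filter, Finset.mem_univ, true_and] at hi ⊢
      exact ⟨by rw [(hprop i).1, hi], Set.mem_range_self i⟩
    · intro i _ j _ h; exact heinj h
    · intro a ha
      simp only [Finset.mem_filter, Finset.mem_univ, true_and] at ha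
      obtain ⟨hsrc, i, rfl⟩ := ha
      exact ⟨i, by simp [← (hprop i).1, hsrc], rfl⟩
  have c2 : (Finset.univ.filter (fun i : Fin (k+1) => w (i+1) = v)).card
      = ((Finset.univ.filter (fun a => G.dst a = v)).filter (· ∈ Set.range e)).card := by
    refine Finset.card_bij (fun i _ => e i) ?_ ?_ ?_
    · intro i hi
      simp only [Finset.mem_filter, Finset.mem_univ, true_and] at hi ⊢
      exact ⟨by rw [(hprop i).2, hi], Set.mem_range_self i⟩
    · intro i _ j _ h; exact heinj h
    · intro a ha
      simp only [Finset.mem_filter, Finset.mem_univ, true_and] at ha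
      obtain ⟨hdst, i, rfl⟩ := ha
      exact ⟨i, by simp [← (hprop i).2, hdst], rfl⟩
  rw [← c1, ← c2]
  refine Finset.card_bij (fun i _ => i - 1) ?_ ?_ ?_
  · intro i hi
    simp only [Finset.mem_filter, Finset.mem_univ, true_and] at hi ⊢
    rw [sub_add_cancel]; exact hi
  · intro i _ j _ h; exact sub_left_injective h
  · intro j hj
    simp only [Finset.mem_filter, Finset.mem_univ, true_and] at hj
    exact ⟨j + 1, by simpa using hj, add_sub_cancel_right j 1⟩

/-- Let `G` be a loopless Eulerian digraph with `m` arcs.  If there is a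
list `((g₁,λ₁),…,(g_k,λ_k))` that is simultaneously a circuit walk from the zero flow to the
full flow of the 0/1-circulation polytope of `G` and a sign-compatible circuit decomposition
of `1 − 0`, then `G` contains a directed cycle with at least `m / k` arcs. -/
theorem scm_walk_gives_long_cycle
    {N α : Type*} [Fintype N] [Fintype α] [DecidableEq N] [DecidableEq α] [Nonempty α]
    (G : Digraph' N α)
    (heul : ∀ v : N, inDeg G v = outDeg G v)
    (k : ℕ) (g : Fin k → α → ℝ) (lam : Fin k → ℝ)
    (hwalk : IsCircuitWalk (incMat G) 0 (boxB α) (boxd α) (0 : α → ℝ) (1 : α → ℝ) k g lam)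
    (hsc : IsSCDecomp (incMat G) (boxB α) ((1 : α → ℝ) - (0 : α → ℝ)) k g lam) :
    ∃ S : Set α, IsSimpleDicycle G S ∧ (Fintype.card α : ℝ) / (k : ℝ) ≤ (S.ncard : ℝ) := by
  classical
  obtain ⟨hcirc, hlam, hsum, hcompat⟩ := hsc
  rw [sub_zero] at hsum
  have hsum' : ∀ a, ∑ i, lam i * g i a = 1 := by
    intro a
    have := congrFun hsum a
    simpa [Finset.sum_apply, Pi.smul_apply, smul_eq_mul] using this
  have hk0 : k ≠ 0 := by
    intro hk
    subst hk
    obtain ⟨a⟩ := ‹Nonempty α›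
    simpa using hsum' a
  have hposj : ∀ a, ∃ j, 0 < g j a := by
    intro a
    by_contra h
    push_neg at h
    have hle : ∑ i, lam i * g i a ≤ 0 :=
      Finset.sum_nonpos fun i _ => mul_nonpos_of_nonneg_of_nonpos (hlam i).le (h i)
    rw [hsum' a] at hle; linarith
  have hnonneg : ∀ i a, 0 ≤ g i a := by
    intro i a
    obtain ⟨j, hj⟩ := hposj a
    have hc := hcompat i j (Sum.inl a)
    rw [boxB_mulVec_inl, boxB_mulVec_inl] at hc
    nlinarith
  set c : Fin k → ℕ := fun i => (Finset.univ.filter (fun a => g i a ≠ 0)).card with hcdef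
  have hcover : (Fintype.card α : ℝ) ≤ ∑ i, (c i : ℝ) := by
    have h1 : (Finset.univ : Finset α) ⊆
        Finset.univ.biUnion (fun i : Fin k => Finset.univ.filter (fun a => g i a ≠ 0)) := by
      intro a _
      obtain ⟨j, hj⟩ := hposj a
      exact Finset.mem_biUnion.mpr
        ⟨j, Finset.mem_univ j, Finset.mem_filter.mpr ⟨Finset.mem_univ a, ne_of_gt hj⟩⟩
    have h2 := (Finset.card_le_card h1).trans Finset.card_biUnion_le
    calc (Fintype.card α : ℝ) = ((Finset.univ : Finset α).card : ℝ) := by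
          rw [Finset.card_univ]
      _ ≤ ((∑ i, c i : ℕ) : ℝ) := by exact_mod_cast h2
      _ = ∑ i, (c i : ℝ) := by push_cast; rfl
  have hex : ∃ i : Fin k, (Fintype.card α : ℝ) / k ≤ (c i : ℝ) := by
    by_contra h
    push_neg at h
    haveI : Nonempty (Fin k) := Fin.pos_iff_nonempty.mp (Nat.pos_of_ne_zero hk0)
    have hne : (Finset.univ : Finset (Fin k)).Nonempty := Finset.univ_nonempty
    have hlt := Finset.sum_lt_sum_of_nonempty hne (fun i _ => h i)
    rw [Finset.sum_const, Finset.card_univ, Fintype.card_fin] at hlt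
    have hkpos : (0:ℝ) < k := by exact_mod_cast Nat.pos_of_ne_zero hk0
    rw [nsmul_eq_mul, mul_div_cancel₀ _ (ne_of_gt hkpos)] at hlt
    linarith
  obtain ⟨i, hi⟩ := hex
  obtain ⟨hker, hgne, -, hsuppmin⟩ := hcirc i
  obtain ⟨S, hSdic, hSsub⟩ := exists_dicycle G (g i) (hnonneg i) hker hgne
  obtain ⟨k', e, w, heinj, hwinj, hSe, hprop⟩ := hSdic
  set y := (Set.range e).indicator (1 : α → ℝ) with hy
  have hymem : ∀ a, a ∈ Set.range e → y a = 1 := fun a ha =>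
    Set.indicator_of_mem ha _
  have hynmem : ∀ a, a ∉ Set.range e → y a = 0 := fun a ha =>
    Set.indicator_of_notMem ha _
  have hyker := dicycle_circulation G k' e w heinj hprop
  have hyne : y ≠ 0 := by
    intro h0
    have h1 : y (e 0) = 1 := hymem _ (Set.mem_range_self 0)
    rw [h0] at h1; simp at h1
  have hnot := hsuppmin y hyker hyne
  have hrsub : Set.range e ⊆ {a | g i a ≠ 0} := hSe ▸ hSsub
  have hsub2 : ∀ a, g i a ≠ 0 → a ∈ Set.range e := by
    intro a0 hga0
    by_contra ha0
    apply hnot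
    rw [Set.ssubset_def]
    constructor
    · intro idx hidx
      cases idx with
      | inl a =>
        rw [Function.mem_support, boxB_mulVec_inl] at hidx
        have hmem : a ∈ Set.range e := by
          by_contra hna; exact hidx (hynmem a hna)
        rw [Function.mem_support, boxB_mulVec_inl]
        exact hrsub hmem
      | inr a =>
        rw [Function.mem_support, boxB_mulVec_inr, neg_ne_zero] at hidx
        have hmem : a ∈ Set.range e := by
          by_contra hna; exact hidx (hynmem a hna)
        rw [Function.mem_support, boxB_mulVec_inr, neg_ne_zero]
        exact hrsub hmem
    · intro hcon
      have h1 : Sum.inl a0 ∈ Function.support ((boxB α).mulVec (g i)) := by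
        rw [Function.mem_support, boxB_mulVec_inl]; exact hga0
      have h2 := hcon h1
      rw [Function.mem_support, boxB_mulVec_inl] at h2
      exact h2 (hynmem a0 ha0)
  have hSeq : S = {a | g i a ≠ 0} := by
    refine le_antisymm hSsub ?_
    intro a ha
    rw [hSe]
    exact hsub2 a ha
  refine ⟨S, ⟨k', e, w, heinj, hwinj, hSe, hprop⟩, ?_⟩
  rw [hSeq]
  have hset : {a | g i a ≠ 0} = ↑(Finset.univ.filter (fun a => g i a ≠ 0)) := by
    ext a; simp
  rw [hset, Set.ncard_coe_finset]
  exact hi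
end
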